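/- arXiv:2410.03910 — 4 statements merged into one kernel-verified Lean document; each statement's English description precedes it below -/
import Mathlib

section
/- With the (f,p)-Wasserstein divergence D as defined, if f(x) > 0 for all x > 0, then D(A‖B) = 0 if and only if A = B (as multisets of off-diagonal points). -/
open Multiset
open scoped ENNReal

attribute [local instance] Classical.propDecidable

noncomputable section

/-- A point of an (extended) persistence diagram: finite birth, possibly infinite death. -/
abbrev Pt : Type := ℝ × EReal

/-- A persistence diagram: a finite multiset of points strictly above the diagonal
(the diagonal itself, with infinite multiplicity, is treated implicitly). -/
def IsPD (A : Multiset Pt) : Prop := ∀ a ∈ A, (a.1 : EReal) < a.2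

/-- Sup-norm distance between two diagram points, with the convention that two
infinite death coordinates are at distance zero from each other. -/
def dInfty (a b : Pt) : ℝ≥0∞ :=
  max (ENNReal.ofReal |a.1 - b.1|)
    (if a.2 = ⊤ ∧ b.2 = ⊤ then 0 else (a.2 - b.2).abs)

/-- Sup-norm distance from a point to its diagonal projection
`λ(x,y) = ((x+y)/2,(x+y)/2)`; it is `∞` for points with infinite death. -/
def dDiag (a : Pt) : ℝ≥0∞ :=
  if a.2 = ⊤ then ⊤ else (a.2 - (a.1 : EReal)).abs / 2

/-- A point lying on the diagonal. -/
def isDiag (a : Pt) : Prop := a.2 = (a.1 : EReal)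

/-- `M` encodes an injection from the diagram `A` into the diagram `B` augmented with
all diagonal points: every point of `A` is matched (to an off-diagonal point of `B`,
with multiplicity, or to a diagonal point). -/
def IsInjMatching (A B : Multiset Pt) (M : Multiset (Pt × Pt)) : Prop :=
  M.map Prod.fst = A ∧ (M.map Prod.snd).filter (fun b => ¬ isDiag b) ≤ B

/-- The points of `B` not in the image of the injection encoded by `M`. -/
def unmatched (B : Multiset Pt) (M : Multiset (Pt × Pt)) : Multiset Pt :=
  B - (M.map Prod.snd).filter (fun b => ¬ isDiag b)

/-- The cost of an injection: matched pairs contribute `‖a-γ(a)‖_∞^p`, unmatched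
points of `B` contribute `f(‖b-λ(b)‖_∞)^p`. -/
def injCost (f : ℝ≥0∞ → ℝ≥0∞) (p : ℝ) (B : Multiset Pt) (M : Multiset (Pt × Pt)) : ℝ≥0∞ :=
  (M.map fun q => dInfty q.1 q.2 ^ p).sum +
    ((unmatched B M).map fun b => f (dDiag b) ^ p).sum

/-- The `(f,p)`-Wasserstein divergence `D_p^f(A‖B)`. -/
def WDiv (f : ℝ≥0∞ → ℝ≥0∞) (p : ℝ) (A B : Multiset Pt) : ℝ≥0∞ :=
  (⨅ (M : Multiset (Pt × Pt)) (_ : IsInjMatching A B M), injCost f p B M) ^ (1 / p)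

/-- The `(f,∞)`-bottleneck divergence `D_∞^f(A‖B)`. -/
def WDivInf (f : ℝ≥0∞ → ℝ≥0∞) (A B : Multiset Pt) : ℝ≥0∞ :=
  ⨅ (M : Multiset (Pt × Pt)) (_ : IsInjMatching A B M),
    max ((M.map fun q => dInfty q.1 q.2).sup)
      (((unmatched B M).map fun b => f (dDiag b)).sup)

/-- `M` encodes a bijection between `A` and `B`, both augmented with all diagonal
points: the off-diagonal sources are exactly `A` and the off-diagonal targets are
exactly `B`. -/
def IsBijMatching (A B : Multiset Pt) (M : Multiset (Pt × Pt)) : Prop :=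
  (M.map Prod.fst).filter (fun a => ¬ isDiag a) = A ∧
    (M.map Prod.snd).filter (fun b => ¬ isDiag b) = B

/-- The `p`-Wasserstein distance `d_p(A,B)`. -/
def Wass (p : ℝ) (A B : Multiset Pt) : ℝ≥0∞ :=
  (⨅ (M : Multiset (Pt × Pt)) (_ : IsBijMatching A B M),
    (M.map fun q => dInfty q.1 q.2 ^ p).sum) ^ (1 / p)

/-- The bottleneck distance `d_∞(A,B)`. -/
def WassInf (A B : Multiset Pt) : ℝ≥0∞ :=
  ⨅ (M : Multiset (Pt × Pt)) (_ : IsBijMatching A B M),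
    (M.map fun q => dInfty q.1 q.2).sup

/-- `f` is sub-diagonal: `f x ≤ x`. -/
def SubDiag (f : ℝ≥0∞ → ℝ≥0∞) : Prop := ∀ x, f x ≤ x

/-- `f` is sub-additive: `f (x+y) ≤ f x + f y`. -/
def SubAdd (f : ℝ≥0∞ → ℝ≥0∞) : Prop := ∀ x y, f (x + y) ≤ f x + f y

/-- The projection `π_F` deleting the points with infinite death coordinate. -/
def piF (A : Multiset Pt) : Multiset Pt := A.filter (fun a => a.2 ≠ ⊤)

end


section Aux

attribute [local instance] Classical.propDecidable

lemma ennreal_le_sum {s : Multiset ℝ≥0∞} {x : ℝ≥0∞} (h : x ∈ s) : x ≤ s.sum := by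
  obtain ⟨t, rfl⟩ := Multiset.exists_cons_of_mem h
  rw [Multiset.sum_cons]
  exact le_self_add

lemma pt_ne_bot {a : Pt} (h : (a.1 : EReal) < a.2) : a.2 ≠ ⊥ :=
  ne_of_gt (lt_of_le_of_lt bot_le h)

lemma not_isDiag_of_lt {a : Pt} (h : (a.1 : EReal) < a.2) : ¬ isDiag a :=
  fun hd => absurd hd.symm (ne_of_lt h)

lemma dInfty_self {a : Pt} (h : (a.1 : EReal) < a.2) : dInfty a a = 0 := by
  unfold dInfty
  rcases eq_or_ne a.2 ⊤ with h2 | h2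
  · simp [h2]
  · have hb : a.2 ≠ ⊥ := pt_ne_bot h
    lift a.2 to ℝ using ⟨h2, hb⟩ with y
    simp [h2, ← EReal.coe_sub, EReal.abs_def]

lemma dInfty_eq_zero {a b : Pt} (ha : (a.1 : EReal) < a.2) (hb : (b.1 : EReal) < b.2)
    (h : dInfty a b = 0) : a = b := by
  unfold dInfty at h
  have h1 : ENNReal.ofReal |a.1 - b.1| = 0 :=
    le_antisymm (le_trans (le_max_left _ _) h.le) _root_.zero_le
  have h2 : (if a.2 = ⊤ ∧ b.2 = ⊤ then (0:ℝ≥0∞) else (a.2 - b.2).abs) = 0 :=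
    le_antisymm (le_trans (le_max_right _ _) h.le) _root_.zero_le
  have hx : a.1 = b.1 := by
    rw [ENNReal.ofReal_eq_zero] at h1
    have := abs_nonneg (a.1 - b.1)
    have : |a.1 - b.1| = 0 := le_antisymm h1 this
    have := abs_eq_zero.mp this
    linarith
  have hy : a.2 = b.2 := by
    by_cases htt : a.2 = ⊤ ∧ b.2 = ⊤
    · rw [htt.1, htt.2]
    · rw [if_neg htt, EReal.abs_eq_zero_iff] at h2
      have ha' : a.2 ≠ ⊥ := pt_ne_bot ha
      have hb' : b.2 ≠ ⊥ := pt_ne_bot hb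
      rcases eq_or_ne a.2 ⊤ with h2a | h2a
      · rcases eq_or_ne b.2 ⊤ with h2b | h2b
        · exact absurd ⟨h2a, h2b⟩ htt
        · lift b.2 to ℝ using ⟨h2b, hb'⟩ with y
          rw [h2a, EReal.top_sub_coe] at h2
          exact absurd h2 (by simp)
      · rcases eq_or_ne b.2 ⊤ with h2b | h2b
        · lift a.2 to ℝ using ⟨h2a, ha'⟩ with y
          rw [h2b, EReal.sub_top] at h2
          exact absurd h2 (by simp)
        · lift a.2 to ℝ using ⟨h2a, ha'⟩ with y
          lift b.2 to ℝ using ⟨h2b, hb'⟩ with z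
          rw [← EReal.coe_sub, EReal.coe_eq_zero, sub_eq_zero] at h2
          exact_mod_cast h2
  exact Prod.ext hx hy

lemma dDiag_pos {a : Pt} (h : (a.1 : EReal) < a.2) : 0 < dDiag a := by
  unfold dDiag
  rcases eq_or_ne a.2 ⊤ with h2 | h2
  · simp [h2]
  · rw [if_neg h2]
    have hb : a.2 ≠ ⊥ := pt_ne_bot h
    lift a.2 to ℝ using ⟨h2, hb⟩ with y
    rw [← EReal.coe_sub, EReal.abs_def]
    have hxy : a.1 < y := by exact_mod_cast h
    refine ENNReal.div_pos ?_ (by norm_num)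
    rw [Ne, ENNReal.ofReal_eq_zero, not_le]
    rw [abs_pos]
    intro hc
    rw [sub_eq_zero] at hc
    exact absurd hc (ne_of_gt hxy)

lemma dDiag_le_dInfty_diag {a d : Pt} (h : (a.1 : EReal) < a.2) (hd : isDiag d) :
    dDiag a ≤ dInfty a d := by
  unfold dDiag dInfty
  have hdne : d.2 ≠ ⊤ := by rw [hd]; exact EReal.coe_ne_top _
  rcases eq_or_ne a.2 ⊤ with h2 | h2
  · rw [if_pos h2, if_neg (by tauto)]
    rw [h2, hd, EReal.top_sub_coe, EReal.abs_top]
    simp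
  · rw [if_neg h2, if_neg (by tauto)]
    have hb : a.2 ≠ ⊥ := pt_ne_bot h
    lift a.2 to ℝ using ⟨h2, hb⟩ with y
    set x := a.1
    set t := d.1
    rw [hd, ← EReal.coe_sub, ← EReal.coe_sub, EReal.abs_def, EReal.abs_def]
    have hxy : x < y := by exact_mod_cast h
    have key : (y - x) / 2 ≤ max |x - t| |y - t| := by
      rcases le_total (y - t) (t - x) with hc | hc
      · have h1 : t - x ≤ |x - t| := by rw [abs_sub_comm]; exact le_abs_self _
        calc (y - x) / 2 ≤ t - x := by linarith
          _ ≤ max |x - t| |y - t| := le_trans h1 (le_max_left _ _)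
      · have h1 : y - t ≤ |y - t| := le_abs_self _
        calc (y - x) / 2 ≤ y - t := by linarith
          _ ≤ max |x - t| |y - t| := le_trans h1 (le_max_right _ _)
    have h2' : ENNReal.ofReal |y - x| / 2 = ENNReal.ofReal ((y - x) / 2) := by
      rw [abs_of_pos (by linarith), ENNReal.ofReal_div_of_pos (by norm_num)]
      norm_num
    rw [h2']
    calc ENNReal.ofReal ((y - x) / 2) ≤ ENNReal.ofReal (max |x - t| |y - t|) :=
          ENNReal.ofReal_le_ofReal key
      _ = max (ENNReal.ofReal |x - t|) (ENNReal.ofReal |y - t|) := by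
          rcases le_total |x - t| |y - t| with hc | hc
          · rw [max_eq_right hc, max_eq_right (ENNReal.ofReal_le_ofReal hc)]
          · rw [max_eq_left hc, max_eq_left (ENNReal.ofReal_le_ofReal hc)]
      _ ≤ _ := le_refl _

end Aux

set_option maxHeartbeats 1000000 in
/-- If `f x > 0` for all `x > 0`, then `D_p^f(A‖B) = 0` iff `A = B`. -/
theorem wdiv_eq_zero_iff (F : ℝ≥0∞ → ℝ≥0∞) (hc : Continuous F) (hd : SubDiag F) (ha : SubAdd F)
    (hpos : ∀ x : ℝ≥0∞, 0 < x → 0 < F x)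
    (p : ℝ) (hp : 1 ≤ p) (A B : Multiset Pt) (hA : IsPD A) (hB : IsPD B) :
    WDiv F p A B = 0 ↔ A = B := by
  have hp0 : 0 < p := lt_of_lt_of_le one_pos hp
  have hip : 0 < 1 / p := by positivity
  have rpow_pos : ∀ x : ℝ≥0∞, x ≠ 0 → 0 < x ^ p := by
    intro x hx
    rw [pos_iff_ne_zero]
    intro h0
    rcases ENNReal.rpow_eq_zero_iff.mp h0 with ⟨h, _⟩ | ⟨_, h⟩
    · exact hx h
    · linarith
  constructor
  · intro h
    have hinf : (⨅ (M : Multiset (Pt × Pt)) (_ : IsInjMatching A B M), injCost F p B M) = 0 := by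
      unfold WDiv at h
      rcases ENNReal.rpow_eq_zero_iff.mp h with ⟨h0, _⟩ | ⟨_, hneg⟩
      · exact h0
      · linarith
    obtain ⟨ε, hεpos, hεA, hεB, hεAB⟩ :
        ∃ ε : ℝ≥0∞, 0 < ε ∧ (∀ a ∈ A, ε ≤ dDiag a ^ p) ∧
          (∀ b ∈ B, ε ≤ F (dDiag b) ^ p) ∧
          (∀ a ∈ A, ∀ b ∈ B, a ≠ b → ε ≤ dInfty a b ^ p) := by
      classical
      set S : Finset ℝ≥0∞ :=
        ((A.toFinset.image fun a => dDiag a ^ p) ∪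
          (B.toFinset.image fun b => F (dDiag b) ^ p)) ∪
        ((A.toFinset ×ˢ B.toFinset).image fun q =>
          if q.1 = q.2 then 1 else dInfty q.1 q.2 ^ p) with hS
      refine ⟨S.inf id, ?_, ?_, ?_, ?_⟩
      · rw [Finset.lt_inf_iff (by simp : (0:ℝ≥0∞) < ⊤)]
        intro x hx
        simp only [hS, Finset.mem_union, Finset.mem_image, Finset.mem_product,
          Multiset.mem_toFinset] at hx
        rcases hx with (⟨a, haA, rfl⟩ | ⟨b, hbB, rfl⟩) | ⟨q, ⟨hqA, hqB⟩, rfl⟩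
        · exact rpow_pos _ (ne_of_gt (dDiag_pos (hA a haA)))
        · exact rpow_pos _ (ne_of_gt (hpos _ (dDiag_pos (hB b hbB))))
        · by_cases hq : q.1 = q.2
          · rw [if_pos hq]; norm_num
          · rw [if_neg hq]
            refine rpow_pos _ ?_
            intro h0
            exact hq (dInfty_eq_zero (hA _ hqA) (hB _ hqB) h0)
      · intro a haA
        exact Finset.inf_le (Finset.mem_union_left _ (Finset.mem_union_left _
          (Finset.mem_image_of_mem _ (Multiset.mem_toFinset.mpr haA))))
      · intro b hbB
        exact Finset.inf_le (Finset.mem_union_left _ (Finset.mem_union_right _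
          (Finset.mem_image_of_mem _ (Multiset.mem_toFinset.mpr hbB))))
      · intro a haA b hbB hne
        have hmem : (if ((a,b) : Pt × Pt).1 = ((a,b) : Pt × Pt).2 then (1:ℝ≥0∞)
            else dInfty ((a,b) : Pt × Pt).1 ((a,b) : Pt × Pt).2 ^ p) ∈ S :=
          Finset.mem_union_right _ (Finset.mem_image_of_mem _
            (Finset.mem_product.mpr ⟨Multiset.mem_toFinset.mpr haA,
              Multiset.mem_toFinset.mpr hbB⟩))
        rw [if_neg hne] at hmem
        exact Finset.inf_le hmem
    have hlt0 : (⨅ (M : Multiset (Pt × Pt)) (_ : IsInjMatching A B M), injCost F p B M) < ε := by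
      rw [hinf]; exact hεpos
    rw [iInf_lt_iff] at hlt0
    obtain ⟨M, hlt0⟩ := hlt0
    rw [iInf_lt_iff] at hlt0
    obtain ⟨hM, hlt⟩ := hlt0
    unfold injCost at hlt
    have hfst := hM.1
    have hq1A : ∀ q ∈ M, q.1 ∈ A := by
      intro q hq
      rw [← hfst]
      exact Multiset.mem_map_of_mem Prod.fst hq
    have hterm : ∀ q ∈ M, dInfty q.1 q.2 ^ p < ε := by
      intro q hq
      refine lt_of_le_of_lt (le_trans ?_ le_self_add) hlt
      refine ennreal_le_sum ?_
      rw [Multiset.mem_map]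
      exact ⟨q, hq, rfl⟩
    have hnd : ∀ q ∈ M, ¬ isDiag q.2 := by
      intro q hq hdg
      have h1 : dDiag q.1 ≤ dInfty q.1 q.2 := dDiag_le_dInfty_diag (hA _ (hq1A q hq)) hdg
      have h2 : ε ≤ dInfty q.1 q.2 ^ p :=
        le_trans (hεA _ (hq1A q hq)) (ENNReal.rpow_le_rpow h1 hp0.le)
      exact lt_irrefl _ (lt_of_le_of_lt h2 (hterm q hq))
    have hsnd_eq : (M.map Prod.snd).filter (fun b => ¬ isDiag b) = M.map Prod.snd := by
      rw [Multiset.filter_eq_self]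
      intro b hb
      obtain ⟨q, hq, rfl⟩ := Multiset.mem_map.mp hb
      exact hnd q hq
    have hsndB : M.map Prod.snd ≤ B := hsnd_eq ▸ hM.2
    have hq2B : ∀ q ∈ M, q.2 ∈ B :=
      fun q hq => Multiset.mem_of_le hsndB (Multiset.mem_map_of_mem _ hq)
    have heq : ∀ q ∈ M, q.1 = q.2 := by
      intro q hq
      by_contra hne
      exact lt_irrefl _ (lt_of_le_of_lt
        (hεAB _ (hq1A q hq) _ (hq2B q hq) hne) (hterm q hq))
    have hmapeq : M.map Prod.snd = M.map Prod.fst :=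
      Multiset.map_congr rfl (fun q hq => (heq q hq).symm)
    have hAB : A ≤ B := by
      rw [← hfst, ← hmapeq]; exact hsndB
    have hun : unmatched B M = B - A := by
      unfold unmatched
      rw [hsnd_eq, hmapeq, hfst]
    have hBA : B - A = 0 := by
      by_contra h0
      obtain ⟨b, hb⟩ := Multiset.exists_mem_of_ne_zero h0
      have hbB : b ∈ B := Multiset.mem_of_le (tsub_le_self) hb
      have hb' : b ∈ unmatched B M := by rw [hun]; exact hb
      have hle2 : F (dDiag b) ^ p ≤ ((unmatched B M).map fun b => F (dDiag b) ^ p).sum := by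
        refine ennreal_le_sum ?_
        rw [Multiset.mem_map]
        exact ⟨b, hb', rfl⟩
      exact lt_irrefl _ (lt_of_le_of_lt
        (le_trans (hεB _ hbB) (le_trans hle2 le_add_self)) hlt)
    exact le_antisymm hAB (tsub_eq_zero_iff_le.mp hBA)
  · intro h
    subst h
    unfold WDiv
    have hzero : (⨅ (M : Multiset (Pt × Pt)) (_ : IsInjMatching A A M), injCost F p A M) = 0 := by
      refine le_antisymm ?_ _root_.zero_le
      set M₀ : Multiset (Pt × Pt) := A.map (fun a => (a, a)) with hM₀def
      have hM₀ : IsInjMatching A A M₀ := by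
        constructor
        · rw [hM₀def, Multiset.map_map]
          simp [Function.comp]
        · rw [hM₀def, Multiset.map_map]
          have h1 : Multiset.map (Prod.snd ∘ fun a => (a, a)) A = A := by
            simp [Function.comp]
          rw [h1]
          exact Multiset.filter_le _ _
      have hcost : injCost F p A M₀ = 0 := by
        unfold injCost unmatched
        have h1 : (M₀.map fun q => dInfty q.1 q.2 ^ p).sum = 0 := by
          rw [Multiset.sum_eq_zero]
          intro x hx
          rw [Multiset.mem_map] at hx
          obtain ⟨q, hq, rfl⟩ := hx
          rw [hM₀def, Multiset.mem_map] at hq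
          obtain ⟨a, haA, rfl⟩ := hq
          rw [dInfty_self (hA a haA)]
          exact ENNReal.zero_rpow_of_pos hp0
        have h2 : M₀.map Prod.snd = A := by
          rw [hM₀def, Multiset.map_map]; simp [Function.comp]
        have h3 : (A.filter fun b => ¬ isDiag b) = A :=
          Multiset.filter_eq_self.mpr (fun a haA => not_isDiag_of_lt (hA a haA))
        rw [h1, h2, h3]
        have h4 : A - A = (0 : Multiset Pt) := tsub_self A
        rw [h4]
        simp
      calc (⨅ (M : Multiset (Pt × Pt)) (_ : IsInjMatching A A M), injCost F p A M)
          ≤ injCost F p A M₀ := iInf₂_le M₀ hM₀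
        _ = 0 := hcost
    rw [hzero]
    exact ENNReal.zero_rpow_of_pos hip
end

section
/- For any persistence diagrams A, B and 1 ≤ p < ∞, d_p(A,B) ≤ (D(A‖B)^p + D(B‖A)^p)^{1/p} ≤ 2^{1/p} d_p(A,B), where D is the (f,p)-Wasserstein divergence and d_p the p-Wasserstein distance. -/
open Multiset
open scoped ENNReal

attribute [local instance] Classical.propDecidable

section AuxSandwich

lemma ereal_abs_sub_comm (x y : EReal) : (x - y).abs = (y - x).abs := by
  induction x <;> induction y <;>
    simp [← EReal.coe_sub, EReal.abs_def, abs_sub_comm, EReal.top_sub_coe, EReal.sub_bot,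
      EReal.bot_sub, EReal.sub_top, EReal.coe_sub_bot]

lemma dInfty_comm (a b : Pt) : dInfty a b = dInfty b a := by
  unfold dInfty
  rw [abs_sub_comm, ereal_abs_sub_comm]
  congr 1
  exact if_congr and_comm rfl rfl

lemma dDiag_le_dInfty {a : Pt} (h : isDiag a) (b : Pt) : dDiag b ≤ dInfty a b := by
  obtain ⟨a1, a2⟩ := a
  obtain ⟨b1, b2⟩ := b
  simp only [isDiag] at h
  subst h
  induction b2 with
  | bot =>
    have : dInfty (a1, (a1 : EReal)) (b1, ⊥) = ⊤ := by
      unfold dInfty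
      rw [if_neg (by simp)]
      simp [EReal.sub_bot]
    rw [this]; exact le_top
  | coe y =>
    have hd : dDiag (b1, (y : EReal)) = ENNReal.ofReal (|y - b1| / 2) := by
      unfold dDiag
      rw [if_neg (by simp)]
      simp only [← EReal.coe_sub, EReal.abs_def]
      rw [ENNReal.ofReal_div_of_pos (by norm_num)]
      norm_num
    have hi : dInfty (a1, (a1 : EReal)) (b1, (y : EReal))
        = max (ENNReal.ofReal |a1 - b1|) (ENNReal.ofReal |a1 - y|) := by
      unfold dInfty
      rw [if_neg (by simp)]
      simp only [← EReal.coe_sub, EReal.abs_def]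
    rw [hd, hi]
    have key : |y - b1| / 2 ≤ max |a1 - b1| |a1 - y| := by
      have h1 : |y - b1| ≤ |y - a1| + |a1 - b1| := abs_sub_le y a1 b1
      have h2 : |y - a1| = |a1 - y| := abs_sub_comm _ _
      rcases le_total |a1 - b1| |a1 - y| with h | h
      · rw [max_eq_right h]; linarith
      · rw [max_eq_left h]; linarith
    rcases le_max_iff.mp key with h | h
    · exact le_trans (ENNReal.ofReal_le_ofReal h) (le_max_left _ _)
    · exact le_trans (ENNReal.ofReal_le_ofReal h) (le_max_right _ _)
  | top =>
    have : dInfty (a1, (a1 : EReal)) (b1, ⊤) = ⊤ := by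
      unfold dInfty
      rw [if_neg (by simp)]
      simp [EReal.sub_top]
    rw [this]; exact le_top

lemma key_csb : ∀ (n : ℕ) (A B : Multiset Pt) (M1 M2 : Multiset (Pt × Pt)),
    M2.card = n →
    (∀ a ∈ A, ¬ isDiag a) → (∀ b ∈ B, ¬ isDiag b) →
    IsInjMatching A B M1 → IsInjMatching B A M2 →
    ∃ M, IsBijMatching A B M ∧ M ≤ M1 + M2.map Prod.swap := by
  intro n
  induction n with
  | zero =>
    intro A B M1 M2 hn hA hB h1 h2
    have hM2 : M2 = 0 := card_eq_zero.mp hn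
    have hB0 : B = 0 := by rw [← h2.1, hM2]; simp
    have hS : (M1.map Prod.snd).filter (fun b => ¬ isDiag b) = B := by
      rw [hB0]; exact le_zero.mp (hB0 ▸ h1.2)
    refine ⟨M1, ⟨?_, hS⟩, le_add_right le_rfl⟩
    rw [h1.1]; exact filter_eq_self.mpr hA
  | succ n ih =>
    intro A B M1 M2 hn hA hB h1 h2
    by_cases hfull : (M1.map Prod.snd).filter (fun b => ¬ isDiag b) = B
    · refine ⟨M1, ⟨?_, hfull⟩, le_add_right le_rfl⟩
      rw [h1.1]; exact filter_eq_self.mpr hA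
    · set S := (M1.map Prod.snd).filter (fun b => ¬ isDiag b) with hSdef
      have hSle : S ≤ B := h1.2
      have hlt : S < B := lt_of_le_of_ne hSle hfull
      have hdiff : B - S ≠ 0 := by
        intro h0
        have hc := Multiset.card_lt_card hlt
        have hc2 : (B - S).card = B.card - S.card := Multiset.card_sub hSle
        rw [h0] at hc2
        simp at hc2
        omega
      obtain ⟨b, hbdiff⟩ := exists_mem_of_ne_zero hdiff
      have hbB : b ∈ B := mem_of_le (Multiset.sub_le_self _ _) hbdiff
      have hSle' : S ≤ B.erase b := by
        rw [le_iff_count]; intro x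
        by_cases hx : x = b
        · subst hx
          have h1c : count x S ≤ count x B := le_iff_count.mp hSle x
          have h2c : 0 < count x (B - S) := count_pos.mpr hbdiff
          rw [count_sub] at h2c
          rw [count_erase_self]
          omega
        · rw [count_erase_of_ne hx]
          exact le_iff_count.mp hSle x
      have hbM2 : b ∈ M2.map Prod.fst := by rw [h2.1]; exact hbB
      obtain ⟨q, hqM2, hq1⟩ := mem_map.mp hbM2
      have hM2dec : M2 = q ::ₘ M2.erase q := (cons_erase hqM2).symm
      have hcard : (M2.erase q).card = n := by
        have := card_erase_of_mem hqM2
        rw [hn] at this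
        simp at this
        omega
      have hfst' : (M2.erase q).map Prod.fst = B.erase b := by
        have hh : M2.map Prod.fst = q.1 ::ₘ (M2.erase q).map Prod.fst := by
          conv_lhs => rw [hM2dec]
          rw [map_cons]
        rw [h2.1, hq1] at hh
        rw [hh, erase_cons_head]
      have hswap : q.swap ::ₘ (M2.erase q).map Prod.swap = M2.map Prod.swap := by
        rw [← map_cons, ← hM2dec]
      by_cases hdq : isDiag q.2
      · -- q matched to a diagonal point: recurse with A, B.erase b, M1, M2.erase q
        have h2' : IsInjMatching (B.erase b) A (M2.erase q) :=
          ⟨hfst', le_trans (filter_le_filter _ (map_le_map (erase_le _ _))) h2.2⟩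
        have h1' : IsInjMatching A (B.erase b) M1 := ⟨h1.1, hSle'⟩
        obtain ⟨M, hMbij, hMle⟩ := ih A (B.erase b) M1 (M2.erase q) hcard hA
          (fun x hx => hB x (mem_of_le (erase_le _ _) hx)) h1' h2'
        refine ⟨q.swap ::ₘ M, ⟨?_, ?_⟩, ?_⟩
        · rw [map_cons, filter_cons_of_neg (p := fun x => ¬ isDiag x) _
            (by rw [Prod.fst_swap]; exact not_not.mpr hdq)]
          exact hMbij.1
        · rw [map_cons, filter_cons_of_pos (p := fun x => ¬ isDiag x) _
            (by rw [Prod.snd_swap, hq1]; exact hB b hbB), Prod.snd_swap, hq1]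
          rw [hMbij.2]
          exact cons_erase hbB
        · calc q.swap ::ₘ M ≤ q.swap ::ₘ (M1 + (M2.erase q).map Prod.swap) := cons_le_cons _ hMle
            _ = M1 + (q.swap ::ₘ (M2.erase q).map Prod.swap) := by
                rw [add_comm M1, ← cons_add, add_comm]
            _ = M1 + M2.map Prod.swap := by rw [hswap]
      · -- q matched to an off-diagonal point q.2 ∈ A
        have hq2A : q.2 ∈ A := by
          have hm : q.2 ∈ (M2.map Prod.snd).filter (fun b => ¬ isDiag b) :=
            mem_filter.mpr ⟨mem_map_of_mem _ hqM2, hdq⟩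
          exact mem_of_le h2.2 hm
        have hq2M1 : q.2 ∈ M1.map Prod.fst := by rw [h1.1]; exact hq2A
        obtain ⟨r, hrM1, hr1⟩ := mem_map.mp hq2M1
        have hM1dec : M1 = r ::ₘ M1.erase r := (cons_erase hrM1).symm
        have hfst1' : (M1.erase r).map Prod.fst = A.erase q.2 := by
          have hh : M1.map Prod.fst = r.1 ::ₘ (M1.erase r).map Prod.fst := by
            conv_lhs => rw [hM1dec]
            rw [map_cons]
          rw [h1.1, hr1] at hh
          rw [hh, erase_cons_head]
        have hsnd2 : (M2.map Prod.snd).filter (fun b => ¬ isDiag b)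
            = q.2 ::ₘ ((M2.erase q).map Prod.snd).filter (fun b => ¬ isDiag b) := by
          conv_lhs => rw [hM2dec]
          rw [map_cons, filter_cons_of_pos (p := fun x => ¬ isDiag x) _ hdq]
        have h2snd' : ((M2.erase q).map Prod.snd).filter (fun b => ¬ isDiag b) ≤ A.erase q.2 := by
          have hle2 : q.2 ::ₘ ((M2.erase q).map Prod.snd).filter (fun b => ¬ isDiag b) ≤ A := by
            rw [← hsnd2]; exact h2.2
          have := erase_le_erase q.2 hle2
          rwa [erase_cons_head] at this
        have h1' : IsInjMatching (A.erase q.2) (B.erase b) (M1.erase r) :=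
          ⟨hfst1', le_trans (filter_le_filter _ (map_le_map (erase_le _ _))) hSle'⟩
        have h2' : IsInjMatching (B.erase b) (A.erase q.2) (M2.erase q) := ⟨hfst', h2snd'⟩
        obtain ⟨M, hMbij, hMle⟩ := ih (A.erase q.2) (B.erase b) (M1.erase r) (M2.erase q) hcard
          (fun x hx => hA x (mem_of_le (erase_le _ _) hx))
          (fun x hx => hB x (mem_of_le (erase_le _ _) hx)) h1' h2'
        refine ⟨q.swap ::ₘ M, ⟨?_, ?_⟩, ?_⟩
        · rw [map_cons, filter_cons_of_pos (p := fun x => ¬ isDiag x) _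
            (by rw [Prod.fst_swap]; exact hdq), Prod.fst_swap]
          rw [hMbij.1]
          exact cons_erase hq2A
        · rw [map_cons, filter_cons_of_pos (p := fun x => ¬ isDiag x) _
            (by rw [Prod.snd_swap, hq1]; exact hB b hbB), Prod.snd_swap, hq1]
          rw [hMbij.2]
          exact cons_erase hbB
        · calc q.swap ::ₘ M
              ≤ q.swap ::ₘ (M1.erase r + (M2.erase q).map Prod.swap) := cons_le_cons _ hMle
            _ = M1.erase r + (q.swap ::ₘ (M2.erase q).map Prod.swap) := by
                rw [add_comm (M1.erase r), ← cons_add, add_comm]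
            _ = M1.erase r + M2.map Prod.swap := by rw [hswap]
            _ ≤ M1 + M2.map Prod.swap := add_le_add_left (erase_le _ _) _

lemma msum_le_msum {s t : Multiset ℝ≥0∞} (h : s ≤ t) : s.sum ≤ t.sum := by
  obtain ⟨u, rfl⟩ := Multiset.le_iff_exists_add.mp h
  rw [Multiset.sum_add]
  exact le_self_add

/-- From a bijective matching, extract an injective matching with smaller cost. -/
lemma injCost_le_of_bij (F : ℝ≥0∞ → ℝ≥0∞) (hd : SubDiag F) {p : ℝ} (hp : 0 ≤ p)
    {A B : Multiset Pt} {M : Multiset (Pt × Pt)} (hM : IsBijMatching A B M) :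
    ∃ M1, IsInjMatching A B M1 ∧
      injCost F p B M1 ≤ (M.map fun q => dInfty q.1 q.2 ^ p).sum := by
  set M1 := M.filter (fun q => ¬ isDiag q.1) with hM1
  set M0 := M.filter (fun q => ¬ ¬ isDiag q.1) with hM0
  have hsplit : M1 + M0 = M := filter_add_not _ M
  have hfst : M1.map Prod.fst = A := by
    rw [hM1, ← hM.1, filter_map]
    rfl
  have hsnd1 : (M1.map Prod.snd).filter (fun b => ¬ isDiag b) ≤ B := by
    rw [← hM.2]
    exact filter_le_filter _ (map_le_map (filter_le _ _))
  have hBsplit : B = (M1.map Prod.snd).filter (fun b => ¬ isDiag b)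
      + (M0.map Prod.snd).filter (fun b => ¬ isDiag b) := by
    rw [← hM.2]
    conv_lhs => rw [← hsplit]
    rw [Multiset.map_add, filter_add]
  have hunm : unmatched B M1 = (M0.map Prod.snd).filter (fun b => ¬ isDiag b) := by
    rw [unmatched, hBsplit, add_tsub_cancel_left]
  refine ⟨M1, ⟨hfst, hsnd1⟩, ?_⟩
  rw [injCost, hunm]
  have hcost0 : (((M0.map Prod.snd).filter (fun b => ¬ isDiag b)).map
      fun b => F (dDiag b) ^ p).sum ≤ (M0.map fun q => dInfty q.1 q.2 ^ p).sum := by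
    calc (((M0.map Prod.snd).filter (fun b => ¬ isDiag b)).map fun b => F (dDiag b) ^ p).sum
        ≤ ((M0.map Prod.snd).map fun b => F (dDiag b) ^ p).sum :=
          msum_le_msum (map_le_map (filter_le _ _))
      _ = (M0.map fun q => F (dDiag q.2) ^ p).sum := by rw [map_map]; rfl
      _ ≤ (M0.map fun q => dInfty q.1 q.2 ^ p).sum := by
          apply sum_map_le_sum_map
          intro q hq
          rw [hM0] at hq
          have hq2 := of_mem_filter hq
          have hdq : isDiag q.1 := not_not.mp hq2
          exact ENNReal.rpow_le_rpow (le_trans (hd _) (dDiag_le_dInfty hdq q.2)) hp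
  calc (M1.map fun q => dInfty q.1 q.2 ^ p).sum
        + (((M0.map Prod.snd).filter (fun b => ¬ isDiag b)).map fun b => F (dDiag b) ^ p).sum
      ≤ (M1.map fun q => dInfty q.1 q.2 ^ p).sum + (M0.map fun q => dInfty q.1 q.2 ^ p).sum :=
        add_le_add_right hcost0 _
    _ = (M.map fun q => dInfty q.1 q.2 ^ p).sum := by
        rw [← hsplit, Multiset.map_add, Multiset.sum_add]


lemma pd_nondiag {A : Multiset Pt} (hA : IsPD A) : ∀ a ∈ A, ¬ isDiag a := by
  intro a ha h
  have hlt := hA a ha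
  rw [h] at hlt
  exact lt_irrefl _ hlt

lemma rpow_one_div_rpow (x : ℝ≥0∞) {p : ℝ} (hp : p ≠ 0) : (x ^ (1/p)) ^ p = x := by
  rw [← ENNReal.rpow_mul, one_div, inv_mul_cancel₀ hp, ENNReal.rpow_one]

lemma bij_swap {A B : Multiset Pt} {M : Multiset (Pt × Pt)} (h : IsBijMatching A B M) :
    IsBijMatching B A (M.map Prod.swap) := by
  constructor
  · rw [map_map]
    have he : (Prod.fst ∘ Prod.swap : Pt × Pt → Pt) = Prod.snd := rfl
    rw [he]; exact h.2
  · rw [map_map]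
    have he : (Prod.snd ∘ Prod.swap : Pt × Pt → Pt) = Prod.fst := rfl
    rw [he]; exact h.1

lemma sum_swap_cost {p : ℝ} (M : Multiset (Pt × Pt)) :
    ((M.map Prod.swap).map fun q => dInfty q.1 q.2 ^ p).sum
      = (M.map fun q => dInfty q.1 q.2 ^ p).sum := by
  rw [map_map]
  apply congrArg
  apply map_congr rfl
  intro q _
  show dInfty q.2 q.1 ^ p = dInfty q.1 q.2 ^ p
  rw [dInfty_comm]

lemma wass_le_aux (p : ℝ) (A B : Multiset Pt) :
    (⨅ M, ⨅ (_ : IsBijMatching B A M), (M.map fun q => dInfty q.1 q.2 ^ p).sum)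
      ≤ ⨅ M, ⨅ (_ : IsBijMatching A B M), (M.map fun q => dInfty q.1 q.2 ^ p).sum := by
  refine le_iInf₂ fun M hM => ?_
  refine le_trans (iInf₂_le (M.map Prod.swap) (bij_swap hM)) ?_
  rw [sum_swap_cost]

lemma wass_comm (p : ℝ) (A B : Multiset Pt) : Wass p A B = Wass p B A := by
  unfold Wass
  rw [le_antisymm (wass_le_aux p A B) (wass_le_aux p B A)]

lemma wdiv_le_wass (F : ℝ≥0∞ → ℝ≥0∞) (hd : SubDiag F) {p : ℝ} (hp0 : 0 ≤ p)
    (hp : 0 ≤ 1/p) (A B : Multiset Pt) : WDiv F p A B ≤ Wass p A B := by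
  unfold WDiv Wass
  apply ENNReal.rpow_le_rpow _ hp
  refine le_iInf₂ fun M hM => ?_
  obtain ⟨M1, h1, hc⟩ := injCost_le_of_bij F hd hp0 hM
  exact le_trans (iInf₂_le M1 h1) hc

end AuxSandwich

/-- Sandwich inequality: `d_p(A,B) ≤ (D(A‖B)^p + D(B‖A)^p)^{1/p} ≤ 2^{1/p} d_p(A,B)`. -/
theorem wdiv_sandwich (F : ℝ≥0∞ → ℝ≥0∞) (hd : SubDiag F) (ha : SubAdd F)
    (p : ℝ) (hp : 1 ≤ p) (A B : Multiset Pt) (hA : IsPD A) (hB : IsPD B) :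
    Wass p A B ≤ (WDiv F p A B ^ p + WDiv F p B A ^ p) ^ (1 / p) ∧
      (WDiv F p A B ^ p + WDiv F p B A ^ p) ^ (1 / p) ≤ (2 : ℝ≥0∞) ^ (1 / p) * Wass p A B := by
  have hp0 : (0:ℝ) < p := lt_of_lt_of_le one_pos hp
  have hpne : p ≠ 0 := ne_of_gt hp0
  have h1p : (0:ℝ) ≤ 1/p := by positivity
  constructor
  · -- lower bound
    have hkey : ∀ M1, IsInjMatching A B M1 → ∀ M2, IsInjMatching B A M2 →
        (⨅ M, ⨅ (_ : IsBijMatching A B M), (M.map fun q => dInfty q.1 q.2 ^ p).sum)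
          ≤ injCost F p B M1 + injCost F p A M2 := by
      intro M1 h1 M2 h2
      obtain ⟨M, hMb, hMle⟩ := key_csb M2.card A B M1 M2 rfl (pd_nondiag hA) (pd_nondiag hB) h1 h2
      refine le_trans (iInf₂_le M hMb) ?_
      calc (M.map fun q => dInfty q.1 q.2 ^ p).sum
          ≤ ((M1 + M2.map Prod.swap).map fun q => dInfty q.1 q.2 ^ p).sum :=
            msum_le_msum (map_le_map hMle)
        _ = (M1.map fun q => dInfty q.1 q.2 ^ p).sum
            + (M2.map fun q => dInfty q.1 q.2 ^ p).sum := by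
            rw [Multiset.map_add, Multiset.sum_add, sum_swap_cost]
        _ ≤ injCost F p B M1 + injCost F p A M2 := add_le_add le_self_add le_self_add
    have hle : (⨅ M, ⨅ (_ : IsBijMatching A B M), (M.map fun q => dInfty q.1 q.2 ^ p).sum)
        ≤ (⨅ M1, ⨅ (_ : IsInjMatching A B M1), injCost F p B M1)
          + (⨅ M2, ⨅ (_ : IsInjMatching B A M2), injCost F p A M2) := by
      rw [ENNReal.iInf_add]
      refine le_iInf fun M1 => ?_
      rw [ENNReal.iInf_add]
      refine le_iInf fun h1 => ?_
      rw [ENNReal.add_iInf]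
      refine le_iInf fun M2 => ?_
      rw [ENNReal.add_iInf]
      refine le_iInf fun h2 => ?_
      exact hkey M1 h1 M2 h2
    have e1 : WDiv F p A B ^ p = ⨅ M1, ⨅ (_ : IsInjMatching A B M1), injCost F p B M1 := by
      unfold WDiv
      exact rpow_one_div_rpow _ hpne
    have e2 : WDiv F p B A ^ p = ⨅ M2, ⨅ (_ : IsInjMatching B A M2), injCost F p A M2 := by
      unfold WDiv
      exact rpow_one_div_rpow _ hpne
    rw [Wass, e1, e2]
    exact ENNReal.rpow_le_rpow hle h1p
  · -- upper bound
    have hW1 : WDiv F p A B ≤ Wass p A B := wdiv_le_wass F hd hp0.le h1p A B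
    have hW2 : WDiv F p B A ≤ Wass p A B := by
      rw [wass_comm]
      exact wdiv_le_wass F hd hp0.le h1p B A
    calc (WDiv F p A B ^ p + WDiv F p B A ^ p) ^ (1/p)
        ≤ (Wass p A B ^ p + Wass p A B ^ p) ^ (1/p) :=
          ENNReal.rpow_le_rpow (add_le_add (ENNReal.rpow_le_rpow hW1 hp0.le)
            (ENNReal.rpow_le_rpow hW2 hp0.le)) h1p
      _ = (2 * Wass p A B ^ p) ^ (1/p) := by rw [two_mul]
      _ = 2 ^ (1/p) * (Wass p A B ^ p) ^ (1/p) := ENNReal.mul_rpow_of_nonneg _ _ h1p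
      _ = 2 ^ (1/p) * Wass p A B := by
          rw [← ENNReal.rpow_mul, mul_one_div, div_self hpne, ENNReal.rpow_one]
end

section
/- Let A be the persistence diagram with single off-diagonal point a = (1−x, 1+x) with 0 < x < 1, and B the diagram with single off-diagonal point b = (1−x+z, 1+x+z) with z > 2^{1/p} x. Then for f ≡ 0, D(A‖B) = D(B‖A) = x and d_p(A,B) = 2^{1/p} x; in particular d_p(A,B) = (D(A‖B)^p + D(B‖A)^p)^{1/p}, so the lower bound in the sandwich inequality is attained. -/
open Multiset
open scoped ENNReal

attribute [local instance] Classical.propDecidable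

section my_aux

attribute [local instance] Classical.propDecidable

/-- dInfty between two finite points. -/
lemma my_dInfty_real (u1 v1 u2 v2 : ℝ) :
    dInfty (u1, (v1 : EReal)) (u2, (v2 : EReal)) =
      max (ENNReal.ofReal |u1 - u2|) (ENNReal.ofReal |v1 - v2|) := by
  simp [dInfty, ← EReal.coe_sub, EReal.abs_def]

/-- Distance to any diagonal point is at least half the persistence. -/
lemma my_max_diag (u v c : ℝ) (huv : u ≤ v) :
    ENNReal.ofReal ((v - u) / 2) ≤ max (ENNReal.ofReal |u - c|) (ENNReal.ofReal |v - c|) := by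
  rcases le_total c ((u + v) / 2) with h | h
  · refine le_max_of_le_right (ENNReal.ofReal_le_ofReal ?_)
    rw [abs_of_nonneg (by linarith)]; linarith
  · refine le_max_of_le_left (ENNReal.ofReal_le_ofReal ?_)
    rw [abs_sub_comm, abs_of_nonneg (by linarith)]; linarith

lemma my_diag_right (u v : ℝ) (t : Pt) (ht : isDiag t) (huv : u ≤ v) :
    ENNReal.ofReal ((v - u) / 2) ≤ dInfty (u, (v : EReal)) t := by
  obtain ⟨c, d⟩ := t
  have hd : d = (c : EReal) := ht
  subst hd
  rw [my_dInfty_real]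
  exact my_max_diag u v c huv

lemma my_diag_left (u v : ℝ) (t : Pt) (ht : isDiag t) (huv : u ≤ v) :
    ENNReal.ofReal ((v - u) / 2) ≤ dInfty t (u, (v : EReal)) := by
  obtain ⟨c, d⟩ := t
  have hd : d = (c : EReal) := ht
  subst hd
  rw [my_dInfty_real, abs_sub_comm c u, abs_sub_comm c v]
  exact my_max_diag u v c huv

lemma my_zero_sum (S : Multiset Pt) (p : ℝ) (hp : 0 < p) :
    (S.map fun b => (fun _ : ℝ≥0∞ => (0 : ℝ≥0∞)) (dDiag b) ^ p).sum = 0 := by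
  rw [Multiset.sum_eq_zero]
  intro y hy
  obtain ⟨b, _, rfl⟩ := Multiset.mem_map.mp hy
  exact ENNReal.zero_rpow_of_pos hp

lemma my_single (M : Multiset (Pt × Pt)) (a : Pt) (h : M.map Prod.fst = {a}) :
    ∃ t, M = {(a, t)} := by
  have hc : Multiset.card M = 1 := by
    have := congrArg Multiset.card h
    simpa using this
  obtain ⟨q, rfl⟩ := Multiset.card_eq_one.mp hc
  simp only [Multiset.map_singleton, Multiset.singleton_inj] at h
  exact ⟨q.2, by rw [← h]⟩

lemma my_not_diag (u v : ℝ) (h : u < v) : ¬ isDiag (u, (v : EReal)) := by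
  simp only [isDiag]
  exact fun hc => absurd (EReal.coe_eq_coe_iff.mp hc) (ne_of_gt h)

/-- Value of the Wasserstein divergence for a pair of one-point diagrams. -/
lemma my_WDiv (p : ℝ) (hp : 1 ≤ p) (u1 v1 : ℝ) (h1 : u1 < v1) (b : Pt)
    (hd : ENNReal.ofReal ((v1 - u1) / 2) ≤ dInfty (u1, (v1 : EReal)) b) :
    WDiv (fun _ => 0) p {(u1, (v1 : EReal))} {b} = ENNReal.ofReal ((v1 - u1) / 2) := by
  have hp0 : (0 : ℝ) < p := lt_of_lt_of_le one_pos hp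
  set a : Pt := (u1, (v1 : EReal)) with ha
  set c : ℝ≥0∞ := ENNReal.ofReal ((v1 - u1) / 2) with hc
  have hinf : (⨅ (M : Multiset (Pt × Pt)) (_ : IsInjMatching {a} {b} M),
      injCost (fun _ => 0) p {b} M) = c ^ p := by
    apply le_antisymm
    · -- match a to its diagonal projection
      set t : Pt := (((u1 + v1) / 2 : ℝ), (((u1 + v1) / 2 : ℝ) : EReal)) with hT
      have htD : isDiag t := rfl
      have hM : IsInjMatching {a} {b} {(a, t)} := by
        constructor
        · simp
        · simp [Multiset.filter_singleton, htD]
      refine le_trans (iInf₂_le {(a, t)} hM) ?_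
      have hcost : injCost (fun _ => 0) p {b} {(a, t)} = dInfty a t ^ p := by
        unfold injCost
        rw [my_zero_sum _ _ hp0]
        simp
      rw [hcost]
      have : dInfty a t = c := by
        rw [ha, hT, my_dInfty_real, hc]
        have e1 : |u1 - (u1 + v1) / 2| = (v1 - u1) / 2 := by
          rw [abs_sub_comm, abs_of_nonneg (by linarith)]; ring
        have e2 : |v1 - (u1 + v1) / 2| = (v1 - u1) / 2 := by
          rw [abs_of_nonneg (by linarith)]; ring
        rw [e1, e2, max_self]
      rw [this]
    · refine le_iInf₂ fun M hM => ?_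
      obtain ⟨t, rfl⟩ := my_single M a hM.1
      have hct : c ≤ dInfty a t := by
        by_cases ht : isDiag t
        · exact my_diag_right u1 v1 t ht h1.le
        · have h2 := hM.2
          simp only [Multiset.map_singleton, Multiset.filter_singleton, if_pos ht] at h2
          have : t = b := by
            have := Multiset.mem_of_le h2 (Multiset.mem_singleton_self t)
            simpa using this
          rw [this]; exact hd
      calc c ^ p ≤ dInfty a t ^ p := ENNReal.rpow_le_rpow hct hp0.le
        _ ≤ injCost (fun _ => 0) p {b} {(a, t)} := by
            unfold injCost; simp
  rw [WDiv, hinf, ← ENNReal.rpow_mul, mul_one_div_cancel (ne_of_gt hp0), ENNReal.rpow_one]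

/-- Value of the Wasserstein distance for the specific pair of diagrams. -/
lemma my_Wass (p x z : ℝ) (hp : 1 ≤ p) (hx0 : 0 < x) (hx1 : x < 1)
    (hz : (2 : ℝ) ^ (1 / p) * x < z) :
    Wass p {((1 - x : ℝ), ((1 + x : ℝ) : EReal))}
        {((1 - x + z : ℝ), ((1 + x + z : ℝ) : EReal))} =
      (2 : ℝ≥0∞) ^ (1 / p) * ENNReal.ofReal x := by
  have hp0 : (0 : ℝ) < p := lt_of_lt_of_le one_pos hp
  have h2p : (1 : ℝ) ≤ 2 ^ (1 / p) := by
    calc (1:ℝ) = 2 ^ (0:ℝ) := by simp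
      _ ≤ 2 ^ (1/p) := Real.rpow_le_rpow_of_exponent_le (by norm_num) (by positivity)
  have hxz : x < z := lt_of_le_of_lt (by nlinarith) hz
  set a : Pt := ((1 - x : ℝ), ((1 + x : ℝ) : EReal)) with ha
  set b : Pt := ((1 - x + z : ℝ), ((1 + x + z : ℝ) : EReal)) with hb
  set c : ℝ≥0∞ := ENNReal.ofReal x with hc
  have hab : dInfty a b = ENNReal.ofReal z := by
    rw [ha, hb, my_dInfty_real]
    have e1 : |(1 - x) - (1 - x + z)| = z := by
      rw [show (1 - x) - (1 - x + z) = -z by ring, abs_neg, abs_of_pos (by linarith)]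
    have e2 : |(1 + x) - (1 + x + z)| = z := by
      rw [show (1 + x) - (1 + x + z) = -z by ring, abs_neg, abs_of_pos (by linarith)]
    rw [e1, e2, max_self]
  have hcx1 : ENNReal.ofReal ((1 + x - (1 - x)) / 2) = c := by
    rw [hc, show (1 + x - (1 - x)) / 2 = x by ring]
  have hcx2 : ENNReal.ofReal ((1 + x + z - (1 - x + z)) / 2) = c := by
    rw [hc, show (1 + x + z - (1 - x + z)) / 2 = x by ring]
  have claimA : ∀ t : Pt, isDiag t → c ≤ dInfty a t := fun t ht => by
    rw [← hcx1]; exact my_diag_right _ _ t ht (by linarith)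
  have claimB : ∀ s : Pt, isDiag s → c ≤ dInfty s b := fun s hs => by
    rw [← hcx2]; exact my_diag_left _ _ s hs (by linarith)
  have hcz : c ≤ ENNReal.ofReal z := ENNReal.ofReal_le_ofReal hxz.le
  have h2c : 2 * c ^ p ≤ ENNReal.ofReal z ^ p := by
    have ho2 : (ENNReal.ofReal (2 ^ (1 / p))) ^ p = 2 := by
      rw [← ENNReal.ofReal_rpow_of_pos (by norm_num : (0:ℝ) < 2), ← ENNReal.rpow_mul,
        one_div_mul_cancel (ne_of_gt hp0), ENNReal.rpow_one, ENNReal.ofReal_ofNat]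
    have e : 2 * c ^ p = (ENNReal.ofReal ((2 : ℝ) ^ (1 / p) * x)) ^ p := by
      rw [ENNReal.ofReal_mul (by positivity), ENNReal.mul_rpow_of_nonneg _ _ hp0.le, ho2, hc]
    rw [e]
    exact ENNReal.rpow_le_rpow (ENNReal.ofReal_le_ofReal hz.le) hp0.le
  have hinf : (⨅ (M : Multiset (Pt × Pt)) (_ : IsBijMatching {a} {b} M),
      (M.map fun q => dInfty q.1 q.2 ^ p).sum) = 2 * c ^ p := by
    apply le_antisymm
    · set t1 : Pt := ((1 : ℝ), ((1 : ℝ) : EReal)) with hT1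
      set s2 : Pt := ((1 + z : ℝ), ((1 + z : ℝ) : EReal)) with hS2
      have ht1D : isDiag t1 := rfl
      have hs2D : isDiag s2 := rfl
      have haND : ¬ isDiag a := my_not_diag _ _ (by linarith)
      have hbND : ¬ isDiag b := my_not_diag _ _ (by linarith)
      have hM : IsBijMatching {a} {b} {(a, t1), (s2, b)} := by
        constructor
        · simp only [Multiset.insert_eq_cons, Multiset.map_cons, Multiset.map_singleton,
            Multiset.filter_cons, Multiset.filter_singleton]
          rw [if_pos haND, if_neg (not_not_intro hs2D)]
          simp
        · simp only [Multiset.insert_eq_cons, Multiset.map_cons, Multiset.map_singleton,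
            Multiset.filter_cons, Multiset.filter_singleton]
          rw [if_neg (not_not_intro ht1D), if_pos hbND]
          simp
      refine le_trans (iInf₂_le _ hM) ?_
      have d1 : dInfty a t1 = c := by
        rw [ha, hT1, my_dInfty_real, hc]
        have e1 : |(1 - x) - 1| = x := by
          rw [show (1 - x) - 1 = -x by ring, abs_neg, abs_of_pos hx0]
        have e2 : |(1 + x) - 1| = x := by
          rw [show (1 + x) - 1 = x by ring, abs_of_pos hx0]
        rw [e1, e2, max_self]
      have d2 : dInfty s2 b = c := by
        rw [hb, hS2, my_dInfty_real, hc]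
        have e1 : |(1 + z) - (1 - x + z)| = x := by
          rw [show (1 + z) - (1 - x + z) = x by ring, abs_of_pos hx0]
        have e2 : |(1 + z) - (1 + x + z)| = x := by
          rw [show (1 + z) - (1 + x + z) = -x by ring, abs_neg, abs_of_pos hx0]
        rw [e1, e2, max_self]
      simp only [Multiset.insert_eq_cons, Multiset.map_cons, Multiset.map_singleton,
        Multiset.sum_cons, Multiset.sum_singleton]
      rw [d1, d2, two_mul]
    · refine le_iInf₂ fun M hM => ?_
      have haM : a ∈ M.map Prod.fst := by
        have : a ∈ (M.map Prod.fst).filter (fun a => ¬ isDiag a) := by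
          rw [hM.1]; exact Multiset.mem_singleton_self a
        exact Multiset.mem_of_mem_filter this
      obtain ⟨q, hq, hq1⟩ := Multiset.mem_map.mp haM
      have hbM : b ∈ M.map Prod.snd := by
        have : b ∈ (M.map Prod.snd).filter (fun b => ¬ isDiag b) := by
          rw [hM.2]; exact Multiset.mem_singleton_self b
        exact Multiset.mem_of_mem_filter this
      obtain ⟨r, hr, hr2⟩ := Multiset.mem_map.mp hbM
      have hq2 : c ≤ dInfty q.1 q.2 := by
        rw [hq1]
        by_cases ht : isDiag q.2
        · exact claimA q.2 ht
        · have : q.2 = b := by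
            have hmem : q.2 ∈ (M.map Prod.snd).filter (fun b => ¬ isDiag b) := by
              exact Multiset.mem_filter.mpr ⟨Multiset.mem_map_of_mem _ hq, ht⟩
            rw [hM.2] at hmem
            simpa using hmem
          rw [this, hab]; exact hcz
      have hr1 : c ≤ dInfty r.1 r.2 := by
        rw [hr2]
        by_cases hs : isDiag r.1
        · exact claimB r.1 hs
        · have : r.1 = a := by
            have hmem : r.1 ∈ (M.map Prod.fst).filter (fun a => ¬ isDiag a) := by
              exact Multiset.mem_filter.mpr ⟨Multiset.mem_map_of_mem _ hr, hs⟩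
            rw [hM.1] at hmem
            simpa using hmem
          rw [this, hab]; exact hcz
      by_cases hqr : q = r
      · -- a is matched directly to b
        have hq2b : q.2 = b := by rw [hqr]; exact hr2
        have : dInfty q.1 q.2 ^ p ∈ M.map fun q => dInfty q.1 q.2 ^ p :=
          Multiset.mem_map_of_mem _ hq
        refine le_trans ?_ (Multiset.single_le_sum (fun y _ => _root_.zero_le) _ this)
        rw [hq1, hq2b, hab]
        exact h2c
      · have hre : r ∈ M.erase q := (Multiset.mem_erase_of_ne (Ne.symm hqr)).mpr hr
        have hMeq : q ::ₘ r ::ₘ ((M.erase q).erase r) = M := by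
          rw [Multiset.cons_erase hre, Multiset.cons_erase hq]
        rw [← hMeq]
        simp only [Multiset.map_cons, Multiset.sum_cons]
        rw [two_mul]
        have b1 : c ^ p ≤ dInfty q.1 q.2 ^ p := ENNReal.rpow_le_rpow hq2 hp0.le
        have b2 : c ^ p ≤ dInfty r.1 r.2 ^ p := ENNReal.rpow_le_rpow hr1 hp0.le
        calc c ^ p + c ^ p ≤ dInfty q.1 q.2 ^ p + dInfty r.1 r.2 ^ p := add_le_add b1 b2
          _ ≤ dInfty q.1 q.2 ^ p + (dInfty r.1 r.2 ^ p +
              (((M.erase q).erase r).map fun q => dInfty q.1 q.2 ^ p).sum) := by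
            exact add_le_add_right (le_add_right (le_refl _)) _
  rw [Wass, hinf, ENNReal.mul_rpow_of_nonneg _ _ (by positivity), ← ENNReal.rpow_mul,
    mul_one_div_cancel (ne_of_gt hp0), ENNReal.rpow_one]

end my_aux

/-- For the one-point diagrams `A = {(1-x,1+x)}` and its diagonal translate
`B = {(1-x+z,1+x+z)}` with `z > 2^{1/p} x`, taking `f ≡ 0` we get
`D(A‖B) = D(B‖A) = x` and `d_p(A,B) = 2^{1/p} x`, so the lower bound of the
sandwich inequality is attained. -/
theorem sandwich_lower_bound_tight (p x z : ℝ) (hp : 1 ≤ p)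
    (hx0 : 0 < x) (hx1 : x < 1) (hz : (2 : ℝ) ^ (1 / p) * x < z) :
    WDiv (fun _ => 0) p {((1 - x : ℝ), ((1 + x : ℝ) : EReal))}
        {((1 - x + z : ℝ), ((1 + x + z : ℝ) : EReal))} = ENNReal.ofReal x ∧
    WDiv (fun _ => 0) p {((1 - x + z : ℝ), ((1 + x + z : ℝ) : EReal))}
        {((1 - x : ℝ), ((1 + x : ℝ) : EReal))} = ENNReal.ofReal x ∧
    Wass p {((1 - x : ℝ), ((1 + x : ℝ) : EReal))}
        {((1 - x + z : ℝ), ((1 + x + z : ℝ) : EReal))} =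
      (2 : ℝ≥0∞) ^ (1 / p) * ENNReal.ofReal x ∧
    Wass p {((1 - x : ℝ), ((1 + x : ℝ) : EReal))}
        {((1 - x + z : ℝ), ((1 + x + z : ℝ) : EReal))} =
      (WDiv (fun _ => 0) p {((1 - x : ℝ), ((1 + x : ℝ) : EReal))}
          {((1 - x + z : ℝ), ((1 + x + z : ℝ) : EReal))} ^ p +
        WDiv (fun _ => 0) p {((1 - x + z : ℝ), ((1 + x + z : ℝ) : EReal))}
          {((1 - x : ℝ), ((1 + x : ℝ) : EReal))} ^ p) ^ (1 / p) := by
  have hp0 : (0 : ℝ) < p := lt_of_lt_of_le one_pos hp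
  have h2p : (1 : ℝ) ≤ 2 ^ (1 / p) := by
    calc (1:ℝ) = 2 ^ (0:ℝ) := by simp
      _ ≤ 2 ^ (1/p) := Real.rpow_le_rpow_of_exponent_le (by norm_num) (by positivity)
  have hxz : x < z := lt_of_le_of_lt (by nlinarith) hz
  have hab : dInfty ((1 - x : ℝ), ((1 + x : ℝ) : EReal))
      ((1 - x + z : ℝ), ((1 + x + z : ℝ) : EReal)) = ENNReal.ofReal z := by
    rw [my_dInfty_real]
    have e1 : |(1 - x) - (1 - x + z)| = z := by
      rw [show (1 - x) - (1 - x + z) = -z by ring, abs_neg, abs_of_pos (by linarith)]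
    have e2 : |(1 + x) - (1 + x + z)| = z := by
      rw [show (1 + x) - (1 + x + z) = -z by ring, abs_neg, abs_of_pos (by linarith)]
    rw [e1, e2, max_self]
  have hba : dInfty ((1 - x + z : ℝ), ((1 + x + z : ℝ) : EReal))
      ((1 - x : ℝ), ((1 + x : ℝ) : EReal)) = ENNReal.ofReal z := by
    rw [my_dInfty_real]
    have e1 : |(1 - x + z) - (1 - x)| = z := by
      rw [show (1 - x + z) - (1 - x) = z by ring, abs_of_pos (by linarith)]
    have e2 : |(1 + x + z) - (1 + x)| = z := by
      rw [show (1 + x + z) - (1 + x) = z by ring, abs_of_pos (by linarith)]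
    rw [e1, e2, max_self]
  have hcz : ENNReal.ofReal x ≤ ENNReal.ofReal z := ENNReal.ofReal_le_ofReal hxz.le
  have hD1 : WDiv (fun _ => 0) p {((1 - x : ℝ), ((1 + x : ℝ) : EReal))}
      {((1 - x + z : ℝ), ((1 + x + z : ℝ) : EReal))} = ENNReal.ofReal x := by
    have h := my_WDiv p hp (1 - x) (1 + x) (by linarith)
      ((1 - x + z : ℝ), ((1 + x + z : ℝ) : EReal))
      (by rw [hab, show (1 + x - (1 - x)) / 2 = x by ring]; exact hcz)
    rw [show (1 + x - (1 - x)) / 2 = x by ring] at h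
    exact h
  have hD2 : WDiv (fun _ => 0) p {((1 - x + z : ℝ), ((1 + x + z : ℝ) : EReal))}
      {((1 - x : ℝ), ((1 + x : ℝ) : EReal))} = ENNReal.ofReal x := by
    have h := my_WDiv p hp (1 - x + z) (1 + x + z) (by linarith)
      ((1 - x : ℝ), ((1 + x : ℝ) : EReal))
      (by rw [hba, show (1 + x + z - (1 - x + z)) / 2 = x by ring]; exact hcz)
    rw [show (1 + x + z - (1 - x + z)) / 2 = x by ring] at h
    exact h
  have hW := my_Wass p x z hp hx0 hx1 hz
  refine ⟨hD1, hD2, hW, ?_⟩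
  rw [hD1, hD2, hW, ← two_mul, ENNReal.mul_rpow_of_nonneg _ _ (by positivity),
    ← ENNReal.rpow_mul, mul_one_div_cancel (ne_of_gt hp0), ENNReal.rpow_one]
end

section
/- Let f : [0,∞) → [0,∞) be sub-diagonal (f(x) ≤ x), sub-additive, continuous, strictly increasing with f(0)=0, and p-increasing, i.e., f((Σ xᵢ^p)^{1/p}) ≤ (Σ f(xᵢ)^p)^{1/p} for all finite nonnegative tuples. Then for every ε > 0 there exists δ > 0 such that for all persistence diagrams A, B with finite points only: if D(A‖B) < δ then d_p(A,B) < ε. -/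
open Multiset
open scoped ENNReal

attribute [local instance] Classical.propDecidable

private lemma sum_fin_eq_sum_map {α : Type*} (g : α → ℝ≥0∞) (l : List α) :
    ∑ i : Fin l.length, g (l.get i) = ((l : Multiset α).map g).sum := by
  induction l with
  | nil => simp
  | cons a l ih =>
    rw [show ((a :: l : List α) : Multiset α) = a ::ₘ (l : Multiset α) from rfl,
      Multiset.map_cons, Multiset.sum_cons, ← ih]
    show ∑ i : Fin (l.length + 1), g ((a :: l).get i) = _
    rw [Fin.sum_univ_succ]
    rfl

private lemma proj_le_dDiag (b : Pt) (hT : b.2 ≠ ⊤) (hB : b.2 ≠ ⊥) :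
    dInfty (((b.1 + b.2.toReal) / 2 : ℝ), ((((b.1 + b.2.toReal) / 2 : ℝ)) : EReal)) b
      ≤ dDiag b := by
  obtain ⟨r, hr⟩ : ∃ r : ℝ, b.2 = (r : EReal) := ⟨b.2.toReal, (EReal.coe_toReal hT hB).symm⟩
  have hrt : b.2.toReal = r := by rw [hr, EReal.toReal_coe]
  rw [dInfty, dDiag, hrt, hr]
  rw [if_neg (fun h => EReal.coe_ne_top _ h.1), if_neg (EReal.coe_ne_top r)]
  rw [← EReal.coe_sub, ← EReal.coe_sub, EReal.abs_def, EReal.abs_def]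
  have e : ENNReal.ofReal |r - b.1| / 2 = ENNReal.ofReal (|r - b.1| / 2) := by
    rw [ENNReal.ofReal_div_of_pos two_pos, ENNReal.ofReal_ofNat]
  rw [e]
  have e1 : (b.1 + r) / 2 - b.1 = (r - b.1) / 2 := by ring
  have e2 : (b.1 + r) / 2 - r = -((r - b.1) / 2) := by ring
  rw [e1, e2, abs_neg, abs_div, abs_two, max_self]

/-- Stability: if `f` is sub-diagonal, sub-additive, continuous, strictly
increasing with `f 0 = 0`, and `p`-increasing, then on diagrams with finite points
the identity map from the divergence topology to the Wasserstein topology is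
continuous: for every `ε > 0` there is `δ > 0` with `D(A‖B) < δ → d_p(A,B) < ε`. -/
theorem stability (F : ℝ≥0∞ → ℝ≥0∞) (hd : SubDiag F) (ha : SubAdd F)
    (hc : Continuous F) (hm : StrictMono F) (h0 : F 0 = 0)
    (p : ℝ) (hp : 1 ≤ p)
    (hpinc : ∀ (n : ℕ) (x : Fin n → ℝ≥0∞), (∀ i, x i ≠ ⊤) →
      F ((∑ i, x i ^ p) ^ (1 / p)) ≤ (∑ i, F (x i) ^ p) ^ (1 / p)) :
    ∀ ε : ℝ≥0∞, 0 < ε → ∃ δ : ℝ≥0∞, 0 < δ ∧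
      ∀ A B : Multiset Pt, IsPD A → IsPD B →
        (∀ a ∈ A, a.2 ≠ ⊤) → (∀ b ∈ B, b.2 ≠ ⊤) →
        WDiv F p A B < δ → Wass p A B < ε := by
  intro ε hε
  have hp0 : (0:ℝ) < p := lt_of_lt_of_le one_pos hp
  have hp0' : p ≠ 0 := ne_of_gt hp0
  have hp1 : (0:ℝ) < 1 / p := by positivity
  set m : ℝ≥0∞ := min ε 1 with hmdef
  have hm0 : m ≠ 0 := (lt_min hε one_pos).ne'
  have hmt : m ≠ ⊤ := ne_top_of_le_ne_top ENNReal.one_ne_top (min_le_right _ _)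
  set c : ℝ≥0∞ := m / 2 / 2 with hcdef
  have hc0 : c ≠ 0 :=
    (ENNReal.div_pos (ENNReal.div_pos hm0 ENNReal.ofNat_ne_top).ne' ENNReal.ofNat_ne_top).ne'
  have hct : c ≠ ⊤ :=
    ne_top_of_le_ne_top hmt (ENNReal.half_le_self.trans ENNReal.half_le_self)
  have hFc : 0 < F c := h0 ▸ hm hc0.bot_lt
  refine ⟨min (F c) c, lt_min hFc hc0.bot_lt, ?_⟩
  set δ : ℝ≥0∞ := min (F c) c with hδdef
  have hδc : δ ≤ c := min_le_right _ _
  have hδF : δ ≤ F c := min_le_left _ _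
  have hδt : δ ≠ ⊤ := ne_top_of_le_ne_top hct hδc
  intro A B hA hB hAfin hBfin hDiv
  rw [WDiv] at hDiv
  have hI : (⨅ (M : Multiset (Pt × Pt)) (_ : IsInjMatching A B M), injCost F p B M)
      < δ ^ p := by
    have h := ENNReal.rpow_lt_rpow hDiv hp0
    rwa [← ENNReal.rpow_mul, one_div_mul_cancel hp0', ENNReal.rpow_one] at h
  rw [iInf_lt_iff] at hI
  obtain ⟨M, hM⟩ := hI
  rw [iInf_lt_iff] at hM
  obtain ⟨hMm, hMc⟩ := hM
  rw [injCost] at hMc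
  set U := unmatched B M with hUdef
  have hUB : U ≤ B := tsub_le_self
  have hUfin : ∀ b ∈ U, b.2 ≠ ⊤ := fun b hb => hBfin b (Multiset.mem_of_le hUB hb)
  have hUbot : ∀ b ∈ U, b.2 ≠ ⊥ := fun b hb =>
    ((EReal.bot_lt_coe b.1).trans (hB b (Multiset.mem_of_le hUB hb))).ne'
  have hdD : ∀ b ∈ U, dDiag b ≠ ⊤ := by
    intro b hb
    obtain ⟨r, hr⟩ : ∃ r : ℝ, b.2 = (r : EReal) :=
      ⟨b.2.toReal, (EReal.coe_toReal (hUfin b hb) (hUbot b hb)).symm⟩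
    rw [dDiag, if_neg (hUfin b hb), hr, ← EReal.coe_sub, EReal.abs_def]
    exact (ENNReal.div_lt_top ENNReal.ofReal_ne_top two_ne_zero).ne
  -- the completed bijection
  set M' : Multiset (Pt × Pt) := M + U.map (fun b =>
    (((((b.1 + b.2.toReal) / 2 : ℝ)), ((((b.1 + b.2.toReal) / 2 : ℝ)) : EReal)), b))
    with hM'def
  have hbij : IsBijMatching A B M' := by
    constructor
    · rw [hM'def, Multiset.map_add, Multiset.map_map, Multiset.filter_add]
      have h1 : (M.map Prod.fst).filter (fun a => ¬ isDiag a) = A := by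
        rw [hMm.1]
        exact Multiset.filter_eq_self.2 (fun a ha => by
          simpa [isDiag] using (hA a ha).ne')
      have h2 : ((U.map (Prod.fst ∘ fun b =>
          (((((b.1 + b.2.toReal) / 2 : ℝ)), ((((b.1 + b.2.toReal) / 2 : ℝ)) : EReal)), b))).filter
            (fun a => ¬ isDiag a)) = 0 := by
        rw [Multiset.filter_eq_nil]
        intro a ha
        rw [Multiset.mem_map] at ha
        obtain ⟨b, _, rfl⟩ := ha
        exact not_not_intro rfl
      rw [h1, h2, add_zero]
    · rw [hM'def, Multiset.map_add, Multiset.map_map, Multiset.filter_add]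
      have h2 : (U.map (Prod.snd ∘ fun b =>
          (((((b.1 + b.2.toReal) / 2 : ℝ)), ((((b.1 + b.2.toReal) / 2 : ℝ)) : EReal)), b))) = U := by
        simp
      rw [h2]
      have h3 : U.filter (fun b => ¬ isDiag b) = U :=
        Multiset.filter_eq_self.2 (fun b hb => by
          simpa [isDiag] using (hB b (Multiset.mem_of_le hUB hb)).ne')
      rw [h3, hUdef, unmatched]
      exact add_tsub_cancel_of_le hMm.2
  -- cost of the bijection
  have hcost : (M'.map fun q => dInfty q.1 q.2 ^ p).sum ≤
      (M.map fun q => dInfty q.1 q.2 ^ p).sum + (U.map fun b => dDiag b ^ p).sum := by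
    rw [hM'def, Multiset.map_add, Multiset.sum_add, Multiset.map_map]
    refine add_le_add (le_refl _) (Multiset.sum_map_le_sum_map _ _ ?_)
    intro b hb
    simp only [Function.comp_apply]
    exact ENNReal.rpow_le_rpow (proj_le_dDiag b (hUfin b hb) (hUbot b hb)) hp0.le
  have hSM : (M.map fun q => dInfty q.1 q.2 ^ p).sum < δ ^ p :=
    lt_of_le_of_lt le_self_add hMc
  have hTlt : (U.map fun b => F (dDiag b) ^ p).sum < δ ^ p :=
    lt_of_le_of_lt le_add_self hMc
  have hT1 : ((U.map fun b => F (dDiag b) ^ p).sum) ^ (1 / p) < δ := by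
    have h := ENNReal.rpow_lt_rpow hTlt hp1
    rwa [← ENNReal.rpow_mul, mul_one_div_cancel hp0', ENNReal.rpow_one] at h
  -- sum conversion for hpinc
  have hlist : ∀ g : Pt → ℝ≥0∞,
      ∑ i : Fin U.toList.length, g (U.toList.get i) = (U.map g).sum := by
    intro g
    rw [sum_fin_eq_sum_map g U.toList, Multiset.coe_toList]
  have hmemU : ∀ i : Fin U.toList.length, U.toList.get i ∈ U := fun i =>
    Multiset.mem_toList.mp (U.toList.get_mem i)
  have happ := hpinc U.toList.length (fun i => dDiag (U.toList.get i))
    (fun i => hdD _ (hmemU i))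
  rw [hlist (fun b => dDiag b ^ p), hlist (fun b => F (dDiag b) ^ p)] at happ
  have hFS : F (((U.map fun b => dDiag b ^ p).sum) ^ (1 / p)) < F c :=
    lt_of_le_of_lt happ (lt_of_lt_of_le hT1 hδF)
  have hS1 : ((U.map fun b => dDiag b ^ p).sum) ^ (1 / p) < c := hm.lt_iff_lt.mp hFS
  have hSc : (U.map fun b => dDiag b ^ p).sum < c ^ p := by
    have h := ENNReal.rpow_lt_rpow hS1 hp0
    rwa [← ENNReal.rpow_mul, one_div_mul_cancel hp0', ENNReal.rpow_one] at h
  -- assemble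
  have hinf : (⨅ (N : Multiset (Pt × Pt)) (_ : IsBijMatching A B N),
      (N.map fun q => dInfty q.1 q.2 ^ p).sum) ≤ (c + c) ^ p := by
    refine le_trans (iInf₂_le M' hbij) (le_trans hcost ?_)
    refine le_trans (add_le_add
      (le_trans hSM.le (ENNReal.rpow_le_rpow hδc hp0.le)) hSc.le) ?_
    exact ENNReal.add_rpow_le_rpow_add c c hp
  have hWle : Wass p A B ≤ c + c := by
    rw [Wass]
    calc (⨅ (N : Multiset (Pt × Pt)) (_ : IsBijMatching A B N),
        (N.map fun q => dInfty q.1 q.2 ^ p).sum) ^ (1 / p)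
        ≤ ((c + c) ^ p) ^ (1 / p) := ENNReal.rpow_le_rpow hinf hp1.le
      _ = c + c := by
          rw [← ENNReal.rpow_mul, mul_one_div_cancel hp0', ENNReal.rpow_one]
  have hcc : c + c < ε := by
    have h1 : c + c = m / 2 := ENNReal.add_halves (m / 2)
    rw [h1]
    exact lt_of_lt_of_le (ENNReal.half_lt_self hm0 hmt) (min_le_left _ _)
  exact lt_of_le_of_lt hWle hcc
end
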